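/- arXiv:2009.10207 — 3 statements merged into one kernel-verified Lean document; each statement's English description precedes it below -/
import Mathlib

section
/- Let X be a type, n : X → X a function, and nil, c₁, c₂ elements of X, with the monotone set operators F, F₁, F₂ on subsets of X defined by F(S) = {x | x = nil ∨ n(x) ∈ S}, F₁(S) = {x | x = nil ∨ (n(x) ∈ S ∧ (c₁ = c₂ → x ≠ c₁))}, F₂(S) = {x | x = nil ∨ (n(x) ∈ S ∧ (c₁ ≠ c₂ → x ≠ c₁))}. Then lfp F ⊆ lfp F₁ ∪ lfp F₂. (The paper's example claim that the sentence α = ∀x. list(x) → (list₁(x) ∨ list₂(x)) is valid under least-fixpoint semantics.) -/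
/-- The operator `F` whose least fixed point interprets `list`. -/
def listF {X : Type*} (n : X → X) (nil : X) : Set X →o Set X :=
  ⟨fun S => {x | x = nil ∨ n x ∈ S}, by
    intro S T hST x hx
    rcases hx with h | h
    · exact Or.inl h
    · exact Or.inr (hST h)⟩

/-- The operator `F₁` whose least fixed point interprets `list₁`. -/
def listF₁ {X : Type*} (n : X → X) (nil c₁ c₂ : X) : Set X →o Set X :=
  ⟨fun S => {x | x = nil ∨ (n x ∈ S ∧ (c₁ = c₂ → x ≠ c₁))}, by
    intro S T hST x hx
    rcases hx with h | ⟨h1, h2⟩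
    · exact Or.inl h
    · exact Or.inr ⟨hST h1, h2⟩⟩

/-- The operator `F₂` whose least fixed point interprets `list₂`. -/
def listF₂ {X : Type*} (n : X → X) (nil c₁ c₂ : X) : Set X →o Set X :=
  ⟨fun S => {x | x = nil ∨ (n x ∈ S ∧ (c₁ ≠ c₂ → x ≠ c₁))}, by
    intro S T hST x hx
    rcases hx with h | ⟨h1, h2⟩
    · exact Or.inl h
    · exact Or.inr ⟨hST h1, h2⟩⟩

/-- The sentence `α = ∀x. list(x) → (list₁(x) ∨ list₂(x))` is valid
under least-fixpoint semantics: `lfp F ⊆ lfp F₁ ∪ lfp F₂`. -/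
theorem lfp_list_subset_union {X : Type*} (n : X → X) (nil c₁ c₂ : X) :
    OrderHom.lfp (listF n nil) ⊆
      OrderHom.lfp (listF₁ n nil c₁ c₂) ∪ OrderHom.lfp (listF₂ n nil c₁ c₂) := by
  by_cases h : c₁ = c₂
  · intro x hx
    right
    revert x
    show OrderHom.lfp (listF n nil) ≤ _
    apply OrderHom.lfp_le
    intro x hx
    rw [← OrderHom.map_lfp (listF₂ n nil c₁ c₂)]
    rcases hx with h1 | h1
    · exact Or.inl h1
    · exact Or.inr ⟨h1, fun hne => absurd h hne⟩
  · intro x hx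
    left
    revert x
    show OrderHom.lfp (listF n nil) ≤ _
    apply OrderHom.lfp_le
    intro x hx
    rw [← OrderHom.map_lfp (listF₁ n nil c₁ c₂)]
    rcases hx with h1 | h1
    · exact Or.inl h1
    · exact Or.inr ⟨h1, fun he => absurd he h⟩
end

section
/- Let X be a type, n : X → X a function, and nil, c₁, c₂ elements of X, with the monotone set operators F, F₁, F₂ on subsets of X defined by F(S) = {x | x = nil ∨ n(x) ∈ S}, F₁(S) = {x | x = nil ∨ (n(x) ∈ S ∧ (c₁ = c₂ → x ≠ c₁))}, F₂(S) = {x | x = nil ∨ (n(x) ∈ S ∧ (c₁ ≠ c₂ → x ≠ c₁))}. Let S, S₁, S₂ be subsets of X such that S₁ is a fixed point of F₁ (F₁(S₁) = S₁) and S₂ is a fixed point of F₂ (F₂(S₂) = S₂). If (F(S ∩ S₁) ⊆ S₁ implies S ⊆ S₁) and (F(S ∩ S₂) ⊆ S₂ implies S ⊆ S₂), then S ⊆ S₁ ∪ S₂. (The paper's example claim that the induction principles IP(L₁) and IP(L₂) together entail α under fixpoint (first-order) semantics, because in each interpretation either PFP(L₁) or PFP(L₂) is satisfied.) -/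
/-- Under fixpoint (first-order) semantics, the induction principles
`IP(L₁)` and `IP(L₂)` together entail `α`: if `S₁, S₂` are fixed points of `F₁, F₂`
and both induction principles hold for `S`, then `S ⊆ S₁ ∪ S₂`. -/
theorem induction_principles_entail_alpha {X : Type*} (n : X → X) (nil c₁ c₂ : X)
    (S S₁ S₂ : Set X)
    (h₁ : listF₁ n nil c₁ c₂ S₁ = S₁) (h₂ : listF₂ n nil c₁ c₂ S₂ = S₂)
    (ip₁ : listF n nil (S ∩ S₁) ⊆ S₁ → S ⊆ S₁)
    (ip₂ : listF n nil (S ∩ S₂) ⊆ S₂ → S ⊆ S₂) :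
    S ⊆ S₁ ∪ S₂ := by
  by_cases hc : c₁ = c₂
  · intro x hx
    refine Or.inr (ip₂ ?_ hx)
    intro y hy
    rw [← h₂]
    rcases hy with h | h
    · exact Or.inl h
    · exact Or.inr ⟨h.2, fun hne => absurd hc hne⟩
  · intro x hx
    refine Or.inl (ip₁ ?_ hx)
    intro y hy
    rw [← h₁]
    rcases hy with h | h
    · exact Or.inl h
    · exact Or.inr ⟨h.2, fun heq => absurd heq hc⟩
end

section
/- There exist a type X, a function n : X → X, and elements nil, c₁, c₂ of X with c₁ = c₂ such that lfp F is not contained in lfp F₁; and there exist a type X, a function n : X → X, and elements nil, c₁, c₂ of X with c₁ ≠ c₂ such that lfp F is not contained in lfp F₂ (where F, F₁, F₂ are the operators F(S) = {x | x = nil ∨ n(x) ∈ S}, F₁(S) = {x | x = nil ∨ (n(x) ∈ S ∧ (c₁ = c₂ → x ≠ c₁))}, F₂(S) = {x | x = nil ∨ (n(x) ∈ S ∧ (c₁ ≠ c₂ → x ≠ c₁))}). (The paper's example claim that for each of the lemmas L₁ = ∀x. list(x) → list₁(x) and L₂ = ∀x. list(x) → list₂(x) there are least-fixpoint models in which the lemma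 does not hold.) -/
/-- For each of the lemmas `L₁ = ∀x. list(x) → list₁(x)` and
`L₂ = ∀x. list(x) → list₂(x)` there are least-fixpoint models in which the lemma
fails: one with `c₁ = c₂` where `lfp F ⊄ lfp F₁`, and one with `c₁ ≠ c₂` where
`lfp F ⊄ lfp F₂`. -/
theorem exists_lfp_models_falsifying_lemmas :
    (∃ (X : Type) (n : X → X) (nil c₁ c₂ : X), c₁ = c₂ ∧
      ¬ OrderHom.lfp (listF n nil) ⊆ OrderHom.lfp (listF₁ n nil c₁ c₂)) ∧
    (∃ (X : Type) (n : X → X) (nil c₁ c₂ : X), c₁ ≠ c₂ ∧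
      ¬ OrderHom.lfp (listF n nil) ⊆ OrderHom.lfp (listF₂ n nil c₁ c₂)) := by
  have hF : false ∈ OrderHom.lfp (listF (fun _ : Bool => true) true) := by
    have hfix := OrderHom.map_lfp (listF (fun _ : Bool => true) true)
    have htrue : true ∈ OrderHom.lfp (listF (fun _ : Bool => true) true) := by
      rw [← hfix]; exact Or.inl rfl
    rw [← hfix]; exact Or.inr htrue
  constructor
  · refine ⟨Bool, fun _ => true, true, false, false, rfl, fun h => ?_⟩
    have h1 : OrderHom.lfp (listF₁ (fun _ : Bool => true) true false false) ⊆ {true} := by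
      apply OrderHom.lfp_le
      rintro x (h | ⟨-, h2⟩)
      · exact h
      · cases x
        · exact absurd rfl (h2 rfl)
        · rfl
    have := h1 (h hF)
    simp at this
  · refine ⟨Bool, fun _ => true, true, false, true, Bool.false_ne_true, fun h => ?_⟩
    have h1 : OrderHom.lfp (listF₂ (fun _ : Bool => true) true false true) ⊆ {true} := by
      apply OrderHom.lfp_le
      rintro x (h | ⟨-, h2⟩)
      · exact h
      · cases x
        · exact absurd rfl (h2 Bool.false_ne_true)
        · rfl
    have := h1 (h hF)
    simp at this
end
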